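/- Under the hypotheses of the previous statement (p_m summing to 1, Voronoi density p_V), the integral of p_V over all of ℝ^d with respect to Lebesgue measure equals 1; that is, p_V is a probability density on ℝ^d. -/

import Mathlib

open MeasureTheory Classical

/-- Any measure absolutely continuous w.r.t. a σ-finite measure has a Lebesgue
decomposition, by the method of exhaustion. -/
lemma myHaveLebesgueDecomposition {α : Type*} [MeasurableSpace α] (μ ν : Measure α)
    [SigmaFinite ν] (hμν : μ ≪ ν) : μ.HaveLebesgueDecomposition ν := by
  have hs : MeasurableSet (μ.sigmaFiniteSetWRT ν) := measurableSet_sigmaFiniteSetWRT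
  have h2 := restrict_compl_sigmaFiniteSetWRT hμν
  have hdecomp : μ = μ.restrict (μ.sigmaFiniteSetWRT ν) + μ.restrict (μ.sigmaFiniteSetWRT ν)ᶜ :=
    (Measure.restrict_add_restrict_compl hs).symm
  rw [hdecomp, h2]
  infer_instance

/-- A perpendicular bisector (as a level set of squared distances) is Lebesgue-null. -/
lemma bisector_volume_zero {d : ℕ} (a b : EuclideanSpace ℝ (Fin d)) (hab : a ≠ b) :
    volume {x : EuclideanSpace ℝ (Fin d) | ‖x - a‖ ^ 2 = ‖x - b‖ ^ 2} = 0 := by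
  set f : EuclideanSpace ℝ (Fin d) →L[ℝ] ℝ := innerSL ℝ (b - a) with hf
  have hba : b - a ≠ 0 := sub_ne_zero.mpr (Ne.symm hab)
  have hfba : f (b - a) = ‖b - a‖ ^ 2 := by
    rw [hf, innerSL_apply_apply, real_inner_self_eq_norm_sq]
  have hker : LinearMap.ker (f : EuclideanSpace ℝ (Fin d) →ₗ[ℝ] ℝ) ≠ ⊤ := by
    intro h
    have h2 : f (b - a) = 0 := by
      have h3 := LinearMap.ker_eq_top.mp h
      have h4 : (f : EuclideanSpace ℝ (Fin d) →ₗ[ℝ] ℝ) (b - a) = 0 := by rw [h3]; rfl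
      exact h4
    rw [hfba] at h2
    exact hba (norm_eq_zero.mp ((pow_eq_zero_iff (two_ne_zero)).mp h2))
  set c : ℝ := (‖b‖ ^ 2 - ‖a‖ ^ 2) / 2 with hc
  set x₀ : EuclideanSpace ℝ (Fin d) := (c / ‖b - a‖ ^ 2) • (b - a) with hx₀
  have hfx₀ : f x₀ = c := by
    rw [hx₀, hf, innerSL_apply_apply, real_inner_smul_right, real_inner_self_eq_norm_sq,
      div_mul_cancel₀]
    exact pow_ne_zero 2 (norm_ne_zero_iff.mpr hba)
  have hset : {x : EuclideanSpace ℝ (Fin d) | ‖x - a‖ ^ 2 = ‖x - b‖ ^ 2}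
      = (fun x => x + (-x₀)) ⁻¹' (LinearMap.ker (f : EuclideanSpace ℝ (Fin d) →ₗ[ℝ] ℝ) : Set _) := by
    ext x
    simp only [Set.mem_setOf_eq, Set.mem_preimage, SetLike.mem_coe, LinearMap.mem_ker]
    have h1 : ‖x - a‖ ^ 2 = ‖x‖ ^ 2 - 2 * inner ℝ x a + ‖a‖ ^ 2 := norm_sub_sq_real x a
    have h2 : ‖x - b‖ ^ 2 = ‖x‖ ^ 2 - 2 * inner ℝ x b + ‖b‖ ^ 2 := norm_sub_sq_real x b
    have hev : (f : EuclideanSpace ℝ (Fin d) →ₗ[ℝ] ℝ) (x + -x₀) = f x - c := by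
      have : (f : EuclideanSpace ℝ (Fin d) →ₗ[ℝ] ℝ) (x + -x₀) = f x + -(f x₀) := by
        rw [map_add, map_neg]; rfl
      rw [this, hfx₀, sub_eq_add_neg]
    rw [hev]
    have hfx : f x = inner ℝ x b - inner ℝ x a := by
      rw [hf, innerSL_apply_apply, inner_sub_left, real_inner_comm b x, real_inner_comm a x]
    constructor
    · intro h
      rw [hfx, hc]
      linarith [h, h1, h2]
    · intro h
      rw [hfx, hc] at h
      linarith [h, h1, h2]
  rw [hset, measure_preimage_add_right]
  exact Measure.addHaar_submodule volume _ hker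

/-- The Voronoi density is a probability density: it integrates to `1` over `ℝ^d`. -/
theorem voronoi_density_integrates_to_one
    (d M : ℕ) (p : Fin M → ℝ) (hp : ∀ m, 0 ≤ p m) (hpsum : ∑ m, p m = 1)
    (K : Set (EuclideanSpace ℝ (Fin d))) (hK : IsCompact K)
    (v : Fin M → EuclideanSpace ℝ (Fin d)) (hv : Function.Injective v)
    (hvK : ∀ m, v m ∈ K)
    (C : Fin M → Set (EuclideanSpace ℝ (Fin d)))
    (hC : ∀ m, C m = {x ∈ K | ∀ m', ‖x - v m‖ ^ 2 ≤ ‖x - v m'‖ ^ 2})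
    (μ : Fin M → Measure (EuclideanSpace ℝ (Fin d)))
    (hμac : ∀ m, μ m ≪ volume)
    (hμpos : ∀ m, 0 < μ m (C m)) (hμfin : ∀ m, μ m (C m) < ⊤)
    (mstar : EuclideanSpace ℝ (Fin d) → Fin M)
    (hmstar_meas : Measurable mstar)
    (hmstar : ∀ x m, ‖x - v (mstar x)‖ ^ 2 ≤ ‖x - v m‖ ^ 2)
    (pV : EuclideanSpace ℝ (Fin d) → ℝ)
    (hpV : ∀ x, pV x =
      if x ∈ K then
        (p (mstar x) / (μ (mstar x) (C (mstar x))).toReal) *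
          ((μ (mstar x)).rnDeriv volume x).toReal
      else 0) :
    ∫ x, pV x ∂volume = 1 := by
  have hKmeas : MeasurableSet K := hK.isClosed.measurableSet
  set S : Fin M → Set (EuclideanSpace ℝ (Fin d)) := fun m => mstar ⁻¹' {m} ∩ K with hS
  have hSmeas : ∀ m, MeasurableSet (S m) := fun m =>
    (hmstar_meas (measurableSet_singleton m)).inter hKmeas
  have hSsub : ∀ m, S m ⊆ C m := by
    intro m x hx
    rw [hC]
    refine ⟨hx.2, fun m' => ?_⟩
    have h1 : mstar x = m := hx.1
    rw [← h1]
    exact hmstar x m'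
  -- the difference C m \ S m is contained in the union of bisectors, hence null
  have hnull : ∀ m, volume (C m \ S m) = 0 := by
    intro m
    have hsub : C m \ S m ⊆ ⋃ (m' : Fin M) (_ : m' ≠ m),
        {x : EuclideanSpace ℝ (Fin d) | ‖x - v m‖ ^ 2 = ‖x - v m'‖ ^ 2} := by
      intro x hx
      obtain ⟨hxC, hxS⟩ := hx
      rw [hC] at hxC
      obtain ⟨hxK, hxmin⟩ := hxC
      have hne : mstar x ≠ m := fun h => hxS ⟨h, hxK⟩
      refine Set.mem_iUnion.mpr ⟨mstar x, Set.mem_iUnion.mpr ⟨hne, ?_⟩⟩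
      exact le_antisymm (hxmin (mstar x)) (hmstar x m)
    refine measure_mono_null hsub ?_
    refine measure_iUnion_null fun m' => measure_iUnion_null fun hm' => ?_
    exact bisector_volume_zero (v m) (v m') (fun h => hm' (hv h).symm)
  have hμeq : ∀ m, μ m (S m) = μ m (C m) := by
    intro m
    refine le_antisymm (measure_mono (hSsub m)) ?_
    calc μ m (C m) ≤ μ m (S m ∪ (C m \ S m)) := by
          refine measure_mono fun x hx => ?_
          by_cases h : x ∈ S m
          · exact Or.inl h
          · exact Or.inr ⟨hx, h⟩
      _ ≤ μ m (S m) + μ m (C m \ S m) := measure_union_le _ _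
      _ = μ m (S m) := by rw [hμac m (hnull m), add_zero]
  -- set-lintegral of the RN derivative over S m
  have hlint : ∀ m, ∫⁻ x in S m, (μ m).rnDeriv volume x ∂volume = μ m (C m) := by
    intro m
    haveI := myHaveLebesgueDecomposition (μ m) volume (hμac m)
    rw [Measure.setLIntegral_rnDeriv' (hμac m) (hSmeas m), hμeq m]
  have hlint_ne : ∀ m, ∫⁻ x in S m, (μ m).rnDeriv volume x ∂volume ≠ ⊤ := fun m => by
    rw [hlint m]; exact (hμfin m).ne
  have hintegral : ∀ m, ∫ x in S m, ((μ m).rnDeriv volume x).toReal ∂volume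
      = (μ m (C m)).toReal := by
    intro m
    rw [integral_toReal ((Measure.measurable_rnDeriv _ _).aemeasurable)
      (ae_lt_top (Measure.measurable_rnDeriv _ _) (hlint_ne m)), hlint m]
  -- rewrite pV as a finite sum of indicators
  have hrw : ∀ x, pV x = ∑ m, (S m).indicator
      (fun x => (p m / (μ m (C m)).toReal) * ((μ m).rnDeriv volume x).toReal) x := by
    intro x
    rw [hpV, Finset.sum_eq_single (mstar x)]
    · by_cases hx : x ∈ K
      · rw [if_pos hx, Set.indicator_of_mem (show x ∈ S (mstar x) from ⟨rfl, hx⟩)]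
      · rw [if_neg hx, Set.indicator_of_notMem (fun h => hx h.2)]
    · intro m _ hm
      exact Set.indicator_of_notMem (fun h => hm (Set.mem_singleton_iff.mp h.1).symm) _
    · intro h
      exact absurd (Finset.mem_univ _) h
  have hint : ∀ m, Integrable ((S m).indicator
      (fun x => (p m / (μ m (C m)).toReal) * ((μ m).rnDeriv volume x).toReal)) volume := by
    intro m
    rw [integrable_indicator_iff (hSmeas m)]
    exact (integrable_toReal_of_lintegral_ne_top
      ((Measure.measurable_rnDeriv _ _).aemeasurable) (hlint_ne m)).const_mul _
  calc ∫ x, pV x ∂volume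
      = ∫ x, ∑ m, (S m).indicator
          (fun x => (p m / (μ m (C m)).toReal) * ((μ m).rnDeriv volume x).toReal) x ∂volume := by
        simp_rw [hrw]
    _ = ∑ m, ∫ x, (S m).indicator
          (fun x => (p m / (μ m (C m)).toReal) * ((μ m).rnDeriv volume x).toReal) x ∂volume :=
        integral_finset_sum _ (fun m _ => hint m)
    _ = ∑ m, (p m / (μ m (C m)).toReal) * (μ m (C m)).toReal := by
        refine Finset.sum_congr rfl fun m _ => ?_
        rw [integral_indicator (hSmeas m), integral_const_mul, hintegral m]
    _ = ∑ m, p m := by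
        refine Finset.sum_congr rfl fun m _ => ?_
        rw [div_mul_cancel₀]
        exact ENNReal.toReal_ne_zero.mpr ⟨(hμpos m).ne', (hμfin m).ne⟩
    _ = 1 := hpsum
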